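/- Let r ≥ 1 be an integer and let p be a multiple of 2^r with p ≥ 2^r. Then the number of functions f from {1,…,p} to the set of subsets of {1,…,r} such that, for every j ∈ {0,1,…,r}, exactly binomial(r,j)·p/2^r indices i ∈ {1,…,p} satisfy |f(i)| = j, is at least (2^r)^p · (2^r − 1)! / (2^{2^r} · p^{2^r}), as an inequality of rational numbers. -/

import Mathlib

lemma aux_pow (k a : ℕ) : a^(k+1) + (k+1)*a^k ≤ (a+1)^(k+1) := by
  induction k with
  | zero => simp
  | succ k ih =>
    have h1 : (a+1)^(k+2) = (a+1) * (a+1)^(k+1) := by ring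
    have h2 : (a+1) * (a^(k+1) + (k+1)*a^k) = a^(k+2) + (k+2)*a^(k+1) + (k+1)*a^k := by ring
    calc a^(k+2) + (k+2)*a^(k+1)
        ≤ (a+1) * (a^(k+1) + (k+1)*a^k) := by rw [h2]; exact Nat.le_add_right _ _
      _ ≤ (a+1) * (a+1)^(k+1) := Nat.mul_le_mul_left _ ih
      _ = (a+1)^(k+2) := h1.symm

lemma aux_two_mul_pow (n : ℕ) (hn : 1 ≤ n) : 2 * n^n ≤ (n+1)^n := by
  obtain ⟨k, rfl⟩ := Nat.exists_eq_add_of_le hn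
  have h := aux_pow k (1 + k)
  calc 2 * (1+k)^(1+k) = (1+k)^(k+1) + (1+k)*(1+k)^k := by ring
    _ ≤ (1+k+1)^(k+1) := by rw [Nat.add_comm 1 k] at h ⊢; exact h
    _ = (1+k+1)^(1+k) := by ring

lemma aux_fact (n : ℕ) (hn : 1 ≤ n) : 2^n * n.factorial ≤ 2 * n^n := by
  induction n with
  | zero => omega
  | succ n ih =>
    rcases Nat.eq_or_lt_of_le hn with h | h
    · simp [← h]
    · have hn1 : 1 ≤ n := by omega
      have h2 := aux_two_mul_pow n hn1
      calc 2^(n+1) * (n+1).factorial = 2 * (n+1) * (2^n * n.factorial) := by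
            rw [Nat.factorial_succ]; ring
        _ ≤ 2 * (n+1) * (2 * n^n) := Nat.mul_le_mul_left _ (ih hn1)
        _ = 2 * ((n+1) * (2 * n^n)) := by ring
        _ ≤ 2 * ((n+1) * (n+1)^n) := Nat.mul_le_mul_left _ (Nat.mul_le_mul_left _ h2)
        _ = 2 * (n+1)^(n+1) := by ring

lemma arith_nat (r q : ℕ) (hr : 1 ≤ r) (hq : 1 ≤ q) :
    (2^r - 1).factorial * (q^(2^r - 1) * 2^(2^(r+1))) ≤ 2^(2^r) * (2^r*q)^(2^r) * 2^(r+2) := by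
  set m := 2^r with hm
  have hm2 : 2 ≤ m := by
    rw [hm]
    calc 2 = 2^1 := rfl
    _ ≤ 2^r := Nat.pow_le_pow_right (by norm_num) hr
  have h1 : 2^(m-1) * (m-1).factorial ≤ 2 * (m-1)^(m-1) := aux_fact (m-1) (by omega)
  have h2 : (m-1)^(m-1) ≤ m^(m-1) := Nat.pow_le_pow_left (by omega) _
  have h3 : (m-1).factorial * 2^m ≤ 2^(r*(m-1)+2) := by
    have hmm : m = (m-1) + 1 := by omega
    have hpow : (2:ℕ)^m = 2^(m-1)*2 := by rw [← pow_succ, Nat.sub_add_cancel (by omega : 1 ≤ m)]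
    calc (m-1).factorial * 2^m = 2 * (2^(m-1) * (m-1).factorial) := by
          rw [hpow]; ring
      _ ≤ 2 * (2 * (m-1)^(m-1)) := Nat.mul_le_mul_left _ h1
      _ ≤ 2 * (2 * m^(m-1)) := Nat.mul_le_mul_left _ (Nat.mul_le_mul_left _ h2)
      _ = 2^2 * (2^r)^(m-1) := by rw [← hm]; ring
      _ = 2^(r*(m-1)+2) := by rw [← pow_mul, ← pow_add]; ring_nf
  have hq2 : q^(m-1) ≤ q^m := Nat.pow_le_pow_right hq (by omega)
  have h2m : 2^(2^(r+1)) = 2^m * 2^m := by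
    rw [← pow_add]
    congr 1
    rw [hm, pow_succ]
    ring
  calc (m-1).factorial * (q^(m-1) * 2^(2^(r+1)))
      = ((m-1).factorial * 2^m) * (2^m * q^(m-1)) := by rw [h2m]; ring
    _ ≤ 2^(r*(m-1)+2) * (2^m * q^(m-1)) := Nat.mul_le_mul_right _ h3
    _ ≤ 2^(r*m+r+2) * (2^m * q^m) := by
        apply Nat.mul_le_mul
        · apply Nat.pow_le_pow_right (by norm_num)
          have : r*(m-1) ≤ r*m := Nat.mul_le_mul_left _ (by omega)
          omega
        · exact Nat.mul_le_mul_left _ hq2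
    _ = 2^m * (2^r*q)^m * 2^(r+2) := by
        rw [mul_pow, ← pow_mul]
        simp only [pow_add]
        ring

private def Bq (q : ℕ) : ℕ → ℚ
  | 0 => 1
  | (r+1) => ((2^(r+1) * q : ℕ) : ℚ) * (Bq q r)^2

lemma Bq_pos (q : ℕ) (hq : 1 ≤ q) : ∀ r, 0 < Bq q r
  | 0 => one_pos
  | (r+1) => by
    have h := Bq_pos q hq r
    have : (0:ℚ) < ((2^(r+1) * q : ℕ) : ℚ) := by positivity
    simpa [Bq] using mul_pos this (pow_pos h 2)

lemma Bq_val (q : ℕ) (r : ℕ) :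
    Bq q r * 2^(r+2) = (q:ℚ)^(2^r - 1) * 2^(2^(r+1)) := by
  induction r with
  | zero => simp [Bq]
  | succ r ih =>
    have h1 : Bq q (r+1) * 2^(r+1+2) = (q:ℚ) * (Bq q r * 2^(r+2))^2 := by
      rw [Bq]
      push_cast
      ring
    rw [h1, ih]
    have h2 : 2^(r+1) - 1 = 2 * (2^r - 1) + 1 := by
      have : 1 ≤ 2^r := Nat.one_le_two_pow
      omega
    have h3 : (2:ℕ)^(r+1+1) = 2^(r+1) * 2 := pow_succ 2 (r+1)
    rw [h2, h3, pow_mul, pow_add, pow_mul]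
    ring

lemma key_multinomial (q : ℕ) (hq : 1 ≤ q) : ∀ r, (2:ℚ)^(r * 2^r * q) ≤
    (((2^r * q).factorial : ℚ) / ((q.factorial : ℚ))^(2^r)) * Bq q r := by
  intro r
  induction r with
  | zero =>
    have : ((q.factorial : ℚ)) ≠ 0 := by positivity
    simp [Bq, this]
  | succ r ih =>
    set N := 2^r * q with hN
    have hNpos : 0 < N := by positivity
    have hq0 : (0:ℚ) < (q.factorial : ℚ) := by positivity
    have hcb : (4:ℚ)^N ≤ ((2*N : ℕ) : ℚ) * (N.centralBinom : ℚ) := by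
      have := Nat.four_pow_le_two_mul_self_mul_centralBinom N hNpos
      exact_mod_cast this
    have hfact : ((2^(r+1) * q).factorial : ℚ) = (N.centralBinom : ℚ) * ((N.factorial : ℚ))^2 := by
      have h1 : 2^(r+1) * q = 2 * N := by rw [hN]; ring
      have h2 : N.centralBinom * N.factorial * N.factorial = (2*N).factorial := by
        have h3 := Nat.choose_mul_factorial_mul_factorial (Nat.le_mul_of_pos_left N (by norm_num : 0 < 2))
        have h4 : 2*N - N = N := by omega
        rw [h4] at h3
        rw [Nat.centralBinom]
        exact h3
      rw [h1, ← h2]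
      push_cast
      ring
    have hrw : ((2^(r+1) * q).factorial : ℚ) / ((q.factorial:ℚ))^(2^(r+1)) * Bq q (r+1)
        = (((2*N:ℕ):ℚ) * (N.centralBinom:ℚ))
          * (((N.factorial:ℚ) / (q.factorial:ℚ)^(2^r)) * Bq q r)^2 := by
      rw [hfact, Bq]
      have h5 : ((2^(r+1) * q : ℕ) : ℚ) = ((2*N : ℕ) : ℚ) := by
        congr 1
        rw [hN]; ring
      rw [h5, pow_succ (2:ℕ) r, pow_mul]
      field_simp
    rw [hrw]
    have hABnn : (0:ℚ) ≤ (2:ℚ)^(r * 2^r * q) := by positivity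
    have hsq : ((2:ℚ)^(r * 2^r * q))^2
        ≤ (((N.factorial:ℚ) / (q.factorial:ℚ)^(2^r)) * Bq q r)^2 :=
      pow_le_pow_left₀ hABnn ih 2
    have hfin : (4:ℚ)^N * ((2:ℚ)^(r * 2^r * q))^2 = (2:ℚ)^((r+1) * 2^(r+1) * q) := by
      rw [show (4:ℚ) = 2^2 by norm_num, ← pow_mul, ← pow_mul, ← pow_add]
      congr 1
      rw [hN]; ring
    calc (2:ℚ)^((r+1) * 2^(r+1) * q) = (4:ℚ)^N * ((2:ℚ)^(r * 2^r * q))^2 := hfin.symm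
      _ ≤ (((2*N:ℕ):ℚ) * (N.centralBinom:ℚ)) * ((2:ℚ)^(r * 2^r * q))^2 := by
          apply mul_le_mul_of_nonneg_right hcb (by positivity)
      _ ≤ (((2*N:ℕ):ℚ) * (N.centralBinom:ℚ))
          * (((N.factorial:ℚ) / (q.factorial:ℚ)^(2^r)) * Bq q r)^2 := by
          apply mul_le_mul_of_nonneg_left hsq
          positivity

open Finset Equiv

lemma count_balanced (r p q : ℕ) (hpq : p = 2^r * q) :
    p.factorial ≤ q.factorial ^ (2^r) *
      ({f : Fin p → Finset (Fin r) | ∀ S : Finset (Fin r),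
          (Finset.univ.filter (fun i => f i = S)).card = q}).ncard := by
  classical
  set T : Set (Fin p → Finset (Fin r)) := {f | ∀ S : Finset (Fin r),
      (Finset.univ.filter (fun i => f i = S)).card = q} with hT
  have hcard : Fintype.card (Fin p) = Fintype.card (Finset (Fin r) × Fin q) := by
    simp [Fintype.card_finset, hpq]
  let e : Fin p ≃ Finset (Fin r) × Fin q := Fintype.equivOfCardEq hcard
  let g : Fin p → Finset (Fin r) := fun i => (e i).1
  have hgfiber : ∀ S : Finset (Fin r), (Finset.univ.filter (fun i => g i = S)).card = q := by
    intro S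
    rw [← Fintype.card_subtype]
    have e1 : {i // g i = S} ≃ {x : Finset (Fin r) × Fin q // x.1 = S} :=
      e.subtypeEquiv (fun i => Iff.rfl)
    have e2 : {x : Finset (Fin r) × Fin q // x.1 = S} ≃ Fin q :=
      { toFun := fun x => x.1.2
        invFun := fun b => ⟨(S, b), rfl⟩
        left_inv := fun x => Subtype.ext (Prod.ext x.2.symm rfl)
        right_inv := fun b => rfl }
    rw [Fintype.card_congr (e1.trans e2), Fintype.card_fin]
  let Φ : Equiv.Perm (Fin p) → (Fin p → Finset (Fin r)) := fun σ => g ∘ σ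
  have himg : ∀ σ, Φ σ ∈ T := by
    intro σ S
    have e4 : {i // g (σ i) = S} ≃ {j // g j = S} := σ.subtypeEquiv (fun i => Iff.rfl)
    have : (Finset.univ.filter (fun i => Φ σ i = S)).card
        = (Finset.univ.filter (fun j => g j = S)).card := by
      rw [← Fintype.card_subtype, ← Fintype.card_subtype]
      exact Fintype.card_congr e4
    rw [this, hgfiber S]
  have hstab : Fintype.card {π : Equiv.Perm (Fin p) // g ∘ π = g} = q.factorial ^ 2^r := by
    rw [DomMulAct.stabilizer_card g]
    rw [Finset.prod_congr rfl (fun S _ => by rw [Fintype.card_subtype, hgfiber S])]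
    simp [Finset.prod_const, Finset.card_univ, Fintype.card_finset]
  have hfiber : ∀ a ∈ Finset.univ.image Φ,
      (Finset.univ.filter (fun σ => Φ σ = a)).card ≤ q.factorial ^ 2^r := by
    intro a ha
    obtain ⟨σ₀, -, rfl⟩ := Finset.mem_image.mp ha
    rw [← Fintype.card_subtype]
    have e3 : {σ : Equiv.Perm (Fin p) // Φ σ = Φ σ₀} ≃ {π : Equiv.Perm (Fin p) // g ∘ π = g} :=
      { toFun := fun σ => ⟨σ₀.symm.trans σ.1, by
          funext x
          have h := congrFun σ.2 (σ₀.symm x)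
          simpa [Φ, Function.comp] using h⟩
        invFun := fun π => ⟨σ₀.trans π.1, by
          funext x
          have h := congrFun π.2 (σ₀ x)
          simpa [Φ, Function.comp] using h⟩
        left_inv := fun σ => Subtype.ext (by ext x; simp)
        right_inv := fun π => Subtype.ext (by ext x; simp) }
    rw [Fintype.card_congr e3, hstab]
  have hmain : Fintype.card (Equiv.Perm (Fin p)) ≤ q.factorial ^ 2^r * (Finset.univ.image Φ).card := by
    rw [← Finset.card_univ]
    exact Finset.card_le_mul_card_image Finset.univ _ hfiber
  have hsub : ↑(Finset.univ.image Φ) ⊆ T := by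
    intro a ha
    rw [Finset.coe_image] at ha
    obtain ⟨σ, -, rfl⟩ := ha
    exact himg σ
  have himgcard : (Finset.univ.image Φ).card ≤ T.ncard := by
    rw [← Set.ncard_coe_finset]
    exact Set.ncard_le_ncard hsub (Set.toFinite T)
  calc p.factorial = Fintype.card (Equiv.Perm (Fin p)) := by
        rw [Fintype.card_perm, Fintype.card_fin]
    _ ≤ q.factorial ^ 2^r * (Finset.univ.image Φ).card := hmain
    _ ≤ q.factorial ^ 2^r * T.ncard := Nat.mul_le_mul_left _ himgcard

open Finset

lemma balanced_mem (r p q : ℕ) (hpq : p = 2^r * q)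
    (f : Fin p → Finset (Fin r))
    (hf : ∀ S : Finset (Fin r), (Finset.univ.filter (fun i => f i = S)).card = q)
    (j : ℕ) (hj : j ≤ r) :
    {i : Fin p | (f i).card = j}.ncard = r.choose j * p / 2^r := by
  classical
  have h1 : {i : Fin p | (f i).card = j}.ncard
      = (Finset.univ.filter (fun i => (f i).card = j)).card := by
    rw [Set.ncard_eq_toFinset_card']
    congr 1
    ext i
    simp
  set A : Finset (Finset (Fin r)) := Finset.univ.filter (fun S => S.card = j) with hA
  have h2 : Finset.univ.filter (fun i => (f i).card = j)
      = A.biUnion (fun S => Finset.univ.filter (fun i => f i = S)) := by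
    ext i
    simp only [Finset.mem_filter, Finset.mem_biUnion, Finset.mem_univ, true_and, hA]
    constructor
    · intro h; exact ⟨f i, h, rfl⟩
    · rintro ⟨S, hS, rfl⟩; exact hS
  have hdisj : ∀ S ∈ A, ∀ S' ∈ A, S ≠ S' →
      Disjoint (Finset.univ.filter (fun i => f i = S))
        (Finset.univ.filter (fun i => f i = S')) := by
    intro S _ S' _ hne
    rw [Finset.disjoint_left]
    intro i hi hi'
    simp only [Finset.mem_filter] at hi hi'
    exact hne (hi.2 ▸ hi'.2 ▸ rfl)
  have h3 : (A.biUnion (fun S => Finset.univ.filter (fun i => f i = S))).card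
      = A.card * q := by
    rw [Finset.card_biUnion hdisj]
    rw [Finset.sum_congr rfl (fun S _ => hf S), Finset.sum_const, smul_eq_mul]
  have hAcard : A.card = r.choose j := by
    have : A = Finset.powersetCard j Finset.univ := by
      rw [Finset.powersetCard_eq_filter, Finset.powerset_univ]
    rw [this, Finset.card_powersetCard, Finset.card_univ, Fintype.card_fin]
  have h4 : r.choose j * p / 2^r = r.choose j * q := by
    rw [hpq, show r.choose j * (2^r*q) = 2^r * (r.choose j * q) by ring,
      Nat.mul_div_cancel_left _ (Nat.pow_pos two_pos)]
  rw [h1, h2, h3, hAcard, h4]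

/-- For `r ≥ 1` and `p` a multiple of `2^r` with `p ≥ 2^r`, the number of
functions `f : [p] → 𝒫([r])` such that for every `j ∈ {0,…,r}` exactly `C(r,j)·p/2^r`
indices `i` satisfy `|f(i)| = j` is at least `(2^r)^p · (2^r - 1)! / (2^{2^r} · p^{2^r})`,
as an inequality of rational numbers. -/
theorem stmt_2 (r p : ℕ) (hr : 1 ≤ r) (hdvd : 2 ^ r ∣ p) (hp : 2 ^ r ≤ p) :
    ((2 ^ r : ℚ) ^ p * (Nat.factorial (2 ^ r - 1) : ℚ)) /
        ((2 : ℚ) ^ (2 ^ r) * (p : ℚ) ^ (2 ^ r)) ≤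
      (({f : Fin p → Finset (Fin r) |
          ∀ j ≤ r, {i : Fin p | (f i).card = j}.ncard = r.choose j * p / 2 ^ r}).ncard : ℚ) := by
  classical
  obtain ⟨q, hpq⟩ := hdvd
  have h1 : 1 ≤ 2^r := Nat.one_le_two_pow
  have hq : 1 ≤ q := by
    rcases Nat.eq_zero_or_pos q with h | h
    · subst h; rw [Nat.mul_zero] at hpq; omega
    · exact h
  have hppos : 0 < p := by omega
  set S : Set (Fin p → Finset (Fin r)) := {f : Fin p → Finset (Fin r) |
      ∀ j ≤ r, {i : Fin p | (f i).card = j}.ncard = r.choose j * p / 2 ^ r} with hS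
  set T : Set (Fin p → Finset (Fin r)) := {f | ∀ S' : Finset (Fin r),
      (Finset.univ.filter (fun i => f i = S')).card = q} with hT
  have hTS : T ⊆ S := fun f hf j hj => balanced_mem r p q hpq f hf j hj
  have h5 : T.ncard ≤ S.ncard := Set.ncard_le_ncard hTS (Set.toFinite S)
  have h6 : p.factorial ≤ q.factorial ^ (2^r) * S.ncard :=
    le_trans (count_balanced r p q hpq) (Nat.mul_le_mul_left _ h5)
  have hfq : (0:ℚ) < ((q.factorial:ℚ))^(2^r) := by positivity
  have hS1 : (p.factorial : ℚ) / (q.factorial:ℚ)^(2^r) ≤ (S.ncard : ℚ) := by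
    rw [div_le_iff₀ hfq]
    calc (p.factorial : ℚ) ≤ ((q.factorial ^ 2^r * S.ncard : ℕ) : ℚ) := by exact_mod_cast h6
      _ = (S.ncard : ℚ) * (q.factorial:ℚ)^(2^r) := by push_cast; ring
  have hBpos := Bq_pos q hq r
  have hkey := key_multinomial q hq r
  rw [← hpq] at hkey
  have hexp : r * 2^r * q = r * p := by rw [hpq]; ring
  rw [hexp] at hkey
  have hS2 : (2:ℚ)^(r*p) / Bq q r ≤ (p.factorial:ℚ)/(q.factorial:ℚ)^(2^r) := by
    rw [div_le_iff₀ hBpos]; exact hkey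
  have hpQ : (0:ℚ) < (p:ℚ) := by exact_mod_cast hppos
  have hden : (0:ℚ) < (2:ℚ)^(2^r) * (p:ℚ)^(2^r) := by positivity
  have hlhs : ((2 ^ r : ℚ) ^ p * (Nat.factorial (2 ^ r - 1) : ℚ)) /
      ((2 : ℚ) ^ (2 ^ r) * (p : ℚ) ^ (2 ^ r)) ≤ (2:ℚ)^(r*p) / Bq q r := by
    rw [div_le_div_iff₀ hden hBpos]
    have h2rp : ((2:ℚ)^r)^p = (2:ℚ)^(r*p) := (pow_mul 2 r p).symm
    rw [h2rp, mul_assoc]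
    apply mul_le_mul_of_nonneg_left _ (by positivity)
    have hmul : (0:ℚ) < (2:ℚ)^(r+2) := by positivity
    rw [← mul_le_mul_iff_of_pos_right hmul, mul_assoc, Bq_val q r]
    have harith := arith_nat r q hr hq
    rw [hpq]
    exact_mod_cast harith
  exact le_trans hlhs (le_trans hS2 hS1)
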